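/- Let A : X → Y and B, C : Y → X satisfy A(BA)² = ABACA = ACABA = (AC)²A. For each n ∈ ℕ, the linear map Γ from R((BA−I)^n)/R((BA−I)^{n+1}) to R((AC−I)^n)/R((AC−I)^{n+1}) induced by x ↦ ACAx is well-defined and injective; consequently dim R((BA−I)^n)/R((BA−I)^{n+1}) ≤ dim R((AC−I)^n)/R((AC−I)^{n+1}). -/

import Mathlib

open Polynomial ContinuousLinearMap

universe u

/-- Purely ring-theoretic key: if `p^2*q = p^3` then `p^(m+2)*(q-1)^j = p^(m+2)*(p-1)^j`. -/
lemma aux_key {R : Type*} [Ring R] (p q : R) (h : p ^ 2 * q = p ^ 3) :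
    ∀ (j m : ℕ), p ^ (m + 2) * (q - 1) ^ j = p ^ (m + 2) * (p - 1) ^ j := by
  have hq : ∀ m : ℕ, p ^ (m + 2) * q = p ^ (m + 3) := by
    intro m
    calc p ^ (m + 2) * q = p ^ m * (p ^ 2 * q) := by rw [pow_add, mul_assoc]
      _ = p ^ m * p ^ 3 := by rw [h]
      _ = p ^ (m + 3) := by rw [← pow_add]
  intro j
  induction j with
  | zero => intro m; simp
  | succ j ih =>
    intro m
    have e1 : p ^ (m + 2) * (q - 1) = p ^ (m + 3) - p ^ (m + 2) := by
      rw [mul_sub, mul_one, hq]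
    have e2 : p ^ (m + 2) * (p - 1) = p ^ (m + 3) - p ^ (m + 2) := by
      rw [mul_sub, mul_one, ← pow_succ]
    calc p ^ (m + 2) * (q - 1) ^ (j + 1)
        = (p ^ (m + 2) * (q - 1)) * (q - 1) ^ j := by rw [pow_succ' (q-1) j, ← mul_assoc]
      _ = (p ^ (m + 3) - p ^ (m + 2)) * (q - 1) ^ j := by rw [e1]
      _ = p ^ (m + 3) * (q - 1) ^ j - p ^ (m + 2) * (q - 1) ^ j := by rw [sub_mul]
      _ = p ^ (m + 3) * (p - 1) ^ j - p ^ (m + 2) * (p - 1) ^ j := by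
          rw [ih (m + 1), ih m]
      _ = (p ^ (m + 2) * (p - 1)) * (p - 1) ^ j := by rw [e2, sub_mul]
      _ = p ^ (m + 2) * (p - 1) ^ (j + 1) := by rw [pow_succ' (p-1) j, ← mul_assoc]

variable {X Y : Type u} [NormedAddCommGroup X] [NormedSpace ℂ X] [CompleteSpace X]
  [NormedAddCommGroup Y] [NormedSpace ℂ Y] [CompleteSpace Y]

section Aux

variable (A : X →L[ℂ] Y) (B C : Y →L[ℂ] X)

/-- intertwining, single step, pointwise. -/
lemma aux_int1 (h3 : A ∘L C ∘L A ∘L B ∘L A = A ∘L C ∘L A ∘L C ∘L A) (x : X) :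
    (A ∘L C ∘L A) ((B ∘L A - 1) x) = (A ∘L C - 1) ((A ∘L C ∘L A) x) := by
  have h3' := DFunLike.congr_fun h3 x
  simp only [comp_apply] at h3' ⊢
  simp only [sub_apply, one_apply_eq_self, comp_apply, map_sub, h3']

lemma aux_int (h3 : A ∘L C ∘L A ∘L B ∘L A = A ∘L C ∘L A ∘L C ∘L A) (k : ℕ) (x : X) :
    (A ∘L C ∘L A) (((B ∘L A - 1) ^ k) x) = ((A ∘L C - 1) ^ k) ((A ∘L C ∘L A) x) := by
  induction k generalizing x with
  | zero => simp
  | succ k ih =>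
    have e : ((B ∘L A - 1) ^ (k + 1)) x = (B ∘L A - 1) (((B ∘L A - 1) ^ k) x) := by
      rw [pow_succ' (B ∘L A - 1) k]; simp [ContinuousLinearMap.mul_apply]
    have e2 : ((A ∘L C - 1) ^ (k + 1)) ((A ∘L C ∘L A) x)
        = (A ∘L C - 1) (((A ∘L C - 1) ^ k) ((A ∘L C ∘L A) x)) := by
      rw [pow_succ' (A ∘L C - 1) k]; simp [ContinuousLinearMap.mul_apply]
    rw [e, aux_int1 A B C h3 (((B ∘L A - 1) ^ k) x), ih, e2]

/-- `(AC-1)^k (A x) = A ((CA-1)^k x)` — pure associativity. -/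
lemma aux_shift (k : ℕ) (x : X) :
    ((A ∘L C - 1) ^ k) (A x) = A (((C ∘L A - 1) ^ k) x) := by
  induction k generalizing x with
  | zero => simp
  | succ k ih =>
    have e1 : ∀ z : X, (A ∘L C - 1) (A z) = A ((C ∘L A - 1) z) := by
      intro z; simp [sub_apply, one_apply, comp_apply, map_sub]
    rw [pow_succ' (A ∘L C - 1) k, pow_succ' (C ∘L A - 1) k]
    simp only [ContinuousLinearMap.mul_apply, ih, e1]

/-- `(BA)^2 ∘ CA = (BA)^3`. -/
lemma aux_ppq (h1 : A ∘L B ∘L A ∘L B ∘L A = A ∘L B ∘L A ∘L C ∘L A) :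
    (B ∘L A) ^ 2 * (C ∘L A) = (B ∘L A) ^ 3 := by
  ext x
  have h1' := DFunLike.congr_fun h1 x
  simp only [comp_apply] at h1' ⊢
  simp only [ContinuousLinearMap.mul_apply, pow_succ, pow_zero,
    ContinuousLinearMap.mul_apply, one_apply, comp_apply]
  exact congrArg B h1'.symm

/-- `(BA)^3 x = B(A(C(A(C(A x)))))`. -/
lemma aux_p3 (h1 : A ∘L B ∘L A ∘L B ∘L A = A ∘L B ∘L A ∘L C ∘L A)
    (h2 : A ∘L B ∘L A ∘L C ∘L A = A ∘L C ∘L A ∘L B ∘L A)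
    (h3 : A ∘L C ∘L A ∘L B ∘L A = A ∘L C ∘L A ∘L C ∘L A) (x : X) :
    ((B ∘L A) ^ 3) x = B (A (C (A (C (A x))))) := by
  have h1' := DFunLike.congr_fun h1 x
  have h2' := DFunLike.congr_fun h2 x
  have h3' := DFunLike.congr_fun h3 x
  simp only [comp_apply] at h1' h2' h3'
  simp only [pow_succ, pow_zero, ContinuousLinearMap.mul_apply, one_apply_eq_self, comp_apply]
  rw [h1', h2', h3']

/-- The key range lemma: injectivity of the induced map. -/
lemma aux_main (h1 : A ∘L B ∘L A ∘L B ∘L A = A ∘L B ∘L A ∘L C ∘L A)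
    (h2 : A ∘L B ∘L A ∘L C ∘L A = A ∘L C ∘L A ∘L B ∘L A)
    (h3 : A ∘L C ∘L A ∘L B ∘L A = A ∘L C ∘L A ∘L C ∘L A) (n : ℕ) (x : X)
    (hx : x ∈ LinearMap.range (((B ∘L A - 1) ^ n : X →L[ℂ] X) : X →ₗ[ℂ] X))
    (hdx : (A ∘L C ∘L A) x ∈ LinearMap.range (((A ∘L C - 1) ^ (n + 1) : Y →L[ℂ] Y) : Y →ₗ[ℂ] Y)) :
    x ∈ LinearMap.range (((B ∘L A - 1) ^ (n + 1) : X →L[ℂ] X) : X →ₗ[ℂ] X) := by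
  obtain ⟨u, hu⟩ := hx
  obtain ⟨y, hy⟩ := hdx
  simp only [ContinuousLinearMap.coe_coe] at hu hy
  set p : X →L[ℂ] X := B ∘L A with hp
  set s : Y →L[ℂ] Y := A ∘L C with hs
  set q : X →L[ℂ] X := C ∘L A with hq
  -- s commutes with (s-1)^(n+1)
  have hcs : Commute s ((s - 1) ^ (n + 1)) :=
    (((Commute.refl s).sub_right (Commute.one_right s)).pow_right (n + 1))
  -- Step A : p^3 x = p ((q-1)^(n+1) (C y))
  have stepA : (p ^ 3) x = p (((q - 1) ^ (n + 1)) (C y)) := by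
    calc (p ^ 3) x = B (A (C (A (C (A x))))) := aux_p3 A B C h1 h2 h3 x
      _ = B (s ((A ∘L C ∘L A) x)) := by simp [hs, comp_apply]
      _ = B (s (((s - 1) ^ (n + 1)) y)) := by rw [hy]
      _ = B (((s - 1) ^ (n + 1)) (s y)) := by
          have := DFunLike.congr_fun hcs.eq y
          simp only [ContinuousLinearMap.mul_apply] at this
          rw [this]
      _ = B (((s - 1) ^ (n + 1)) (A (C y))) := by simp [hs, comp_apply]
      _ = B (A (((q - 1) ^ (n + 1)) (C y))) := by rw [aux_shift A C (n + 1) (C y)]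
      _ = p (((q - 1) ^ (n + 1)) (C y)) := by simp [hp, comp_apply]
  -- Step B : p^5 x = (p-1)^(n+1) (p^3 (C y))
  have hkey : p ^ 3 * (q - 1) ^ (n + 1) = p ^ 3 * (p - 1) ^ (n + 1) :=
    aux_key p q (aux_ppq A B C h1) (n + 1) 1
  have hcp : Commute ((p - 1) ^ (n + 1)) (p ^ 3) :=
    ((((Commute.refl p).sub_left (Commute.one_left p)).pow_right 3).pow_left (n + 1))
  have stepB : (p ^ 5) x = ((p - 1) ^ (n + 1)) ((p ^ 3) (C y)) := by
    have e1 : (p ^ 5) x = (p ^ 2) ((p ^ 3) x) := by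
      have h' : p ^ 5 = p ^ 2 * p ^ 3 := by rw [← pow_add]
      rw [h']; simp [ContinuousLinearMap.mul_apply]
    have hop : p ^ 2 * (p * (q - 1) ^ (n + 1)) = (p - 1) ^ (n + 1) * p ^ 3 := by
      rw [← mul_assoc, ← pow_succ p 2, hkey, ← hcp.eq]
    have e2 : (p ^ 2) (p (((q - 1) ^ (n + 1)) (C y)))
        = ((p - 1) ^ (n + 1)) ((p ^ 3) (C y)) := by
      have h' := DFunLike.congr_fun hop (C y)
      simpa [ContinuousLinearMap.mul_apply] using h'
    rw [e1, stepA, e2]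
  -- Step C : conclude
  set g : X →L[ℂ] X := ∑ i ∈ Finset.range 5, p ^ i with hg
  have hgeom : g * (p - 1) = p ^ 5 - 1 := geom_sum_mul p 5
  have hcg : Commute ((p - 1) ^ (n + 1)) g := by
    refine Commute.sum_right _ _ _ (fun i _ => ?_)
    exact (((Commute.refl p).sub_left (Commute.one_left p)).pow_right i).pow_left (n + 1)
  have hx1 : (p - 1) x = ((p - 1) ^ (n + 1)) u := by
    rw [← hu, pow_succ' (p - 1) n]
    simp [ContinuousLinearMap.mul_apply]
  have hfinal : x = ((p - 1) ^ (n + 1)) ((p ^ 3) (C y) - g u) := by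
    have e3 : g ((p - 1) x) = (p ^ 5) x - x := by
      have h' := DFunLike.congr_fun hgeom x
      simpa [ContinuousLinearMap.mul_apply, sub_apply, one_apply] using h'
    have e4 : g (((p - 1) ^ (n + 1)) u) = ((p - 1) ^ (n + 1)) (g u) := by
      have h' := DFunLike.congr_fun hcg.eq u
      simpa [ContinuousLinearMap.mul_apply] using h'.symm
    have : x = (p ^ 5) x - g (((p - 1) ^ (n + 1)) u) := by
      rw [← hx1, e3]; abel
    rw [this, stepB, e4, map_sub]
  exact ⟨(p ^ 3) (C y) - g u, hfinal.symm⟩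

end Aux

theorem stmt4 (A : X →L[ℂ] Y) (B C : Y →L[ℂ] X)
    (h1 : A ∘L B ∘L A ∘L B ∘L A = A ∘L B ∘L A ∘L C ∘L A)
    (h2 : A ∘L B ∘L A ∘L C ∘L A = A ∘L C ∘L A ∘L B ∘L A)
    (h3 : A ∘L C ∘L A ∘L B ∘L A = A ∘L C ∘L A ∘L C ∘L A) (n : ℕ) :
    (∃ Γ : (LinearMap.range (((B ∘L A - 1) ^ n : X →L[ℂ] X) : X →ₗ[ℂ] X) ⧸
          (LinearMap.range (((B ∘L A - 1) ^ (n + 1) : X →L[ℂ] X) : X →ₗ[ℂ] X)).comap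
            (LinearMap.range (((B ∘L A - 1) ^ n : X →L[ℂ] X) : X →ₗ[ℂ] X)).subtype) →ₗ[ℂ]
        (LinearMap.range (((A ∘L C - 1) ^ n : Y →L[ℂ] Y) : Y →ₗ[ℂ] Y) ⧸
          (LinearMap.range (((A ∘L C - 1) ^ (n + 1) : Y →L[ℂ] Y) : Y →ₗ[ℂ] Y)).comap
            (LinearMap.range (((A ∘L C - 1) ^ n : Y →L[ℂ] Y) : Y →ₗ[ℂ] Y)).subtype),
      Function.Injective Γ ∧
      ∀ (x : LinearMap.range (((B ∘L A - 1) ^ n : X →L[ℂ] X) : X →ₗ[ℂ] X))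
        (hx : (A ∘L C ∘L A) (x : X) ∈ LinearMap.range (((A ∘L C - 1) ^ n : Y →L[ℂ] Y) : Y →ₗ[ℂ] Y)),
        Γ (Submodule.Quotient.mk x) =
          Submodule.Quotient.mk ⟨(A ∘L C ∘L A) (x : X), hx⟩) ∧
    Module.rank ℂ (LinearMap.range (((B ∘L A - 1) ^ n : X →L[ℂ] X) : X →ₗ[ℂ] X) ⧸
        (LinearMap.range (((B ∘L A - 1) ^ (n + 1) : X →L[ℂ] X) : X →ₗ[ℂ] X)).comap
          (LinearMap.range (((B ∘L A - 1) ^ n : X →L[ℂ] X) : X →ₗ[ℂ] X)).subtype) ≤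
      Module.rank ℂ (LinearMap.range (((A ∘L C - 1) ^ n : Y →L[ℂ] Y) : Y →ₗ[ℂ] Y) ⧸
        (LinearMap.range (((A ∘L C - 1) ^ (n + 1) : Y →L[ℂ] Y) : Y →ₗ[ℂ] Y)).comap
          (LinearMap.range (((A ∘L C - 1) ^ n : Y →L[ℂ] Y) : Y →ₗ[ℂ] Y)).subtype) := by
  set Rn := LinearMap.range (((B ∘L A - 1) ^ n : X →L[ℂ] X) : X →ₗ[ℂ] X) with hRn
  set Rn1 := LinearMap.range (((B ∘L A - 1) ^ (n + 1) : X →L[ℂ] X) : X →ₗ[ℂ] X) with hRn1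
  set Sn := LinearMap.range (((A ∘L C - 1) ^ n : Y →L[ℂ] Y) : Y →ₗ[ℂ] Y) with hSn
  set Sn1 := LinearMap.range (((A ∘L C - 1) ^ (n + 1) : Y →L[ℂ] Y) : Y →ₗ[ℂ] Y) with hSn1
  have hmap : ∀ k : ℕ, ∀ x : X, x ∈ LinearMap.range (((B ∘L A - 1) ^ k : X →L[ℂ] X) : X →ₗ[ℂ] X) →
      (A ∘L C ∘L A) x ∈ LinearMap.range (((A ∘L C - 1) ^ k : Y →L[ℂ] Y) : Y →ₗ[ℂ] Y) := by
    rintro k x ⟨u, hu⟩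
    exact ⟨(A ∘L C ∘L A) u, by rw [← hu]; simp only [ContinuousLinearMap.coe_coe]; rw [aux_int A B C h3 k u]⟩
  -- the restricted map
  have hmapn : ∀ x : Rn, (A ∘L C ∘L A) (x : X) ∈ Sn := fun x => hmap n x.1 x.2
  set dl : Rn →ₗ[ℂ] Sn :=
    LinearMap.codRestrict Sn ((A ∘L C ∘L A : X →ₗ[ℂ] Y).domRestrict Rn) hmapn with hdl
  set ψ : Rn →ₗ[ℂ] (Sn ⧸ Sn1.comap Sn.subtype) :=
    (Sn1.comap Sn.subtype).mkQ.comp dl with hψ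
  have hker : Rn1.comap Rn.subtype ≤ LinearMap.ker ψ := by
    intro x hx
    have hx' : (x : X) ∈ Rn1 := hx
    have : (A ∘L C ∘L A) (x : X) ∈ Sn1 := hmap (n + 1) x.1 hx'
    simp only [hψ, LinearMap.mem_ker, LinearMap.comp_apply, Submodule.mkQ_apply]
    rw [Submodule.Quotient.mk_eq_zero]
    exact this
  refine ⟨⟨(Rn1.comap Rn.subtype).liftQ ψ hker, ?_, ?_⟩, ?_⟩
  · -- injectivity
    rw [injective_iff_map_eq_zero]
    intro a ha
    obtain ⟨x, rfl⟩ := Submodule.Quotient.mk_surjective _ a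
    rw [Submodule.liftQ_apply] at ha
    simp only [hψ, LinearMap.comp_apply, Submodule.mkQ_apply] at ha
    rw [Submodule.Quotient.mk_eq_zero] at ha
    have ha' : (A ∘L C ∘L A) (x : X) ∈ Sn1 := ha
    have := aux_main A B C h1 h2 h3 n x.1 x.2 ha'
    rw [Submodule.Quotient.mk_eq_zero]
    exact this
  · -- formula
    intro x hx
    rw [Submodule.liftQ_apply]
    simp only [hψ, LinearMap.comp_apply, Submodule.mkQ_apply]
    congr 1
  · -- rank inequality: extract from the just-constructed map
    exact LinearMap.rank_le_of_injective _ (by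
      rw [injective_iff_map_eq_zero]
      intro a ha
      obtain ⟨x, rfl⟩ := Submodule.Quotient.mk_surjective _ a
      rw [Submodule.liftQ_apply (f := ψ) (h := hker)] at ha
      simp only [hψ, LinearMap.comp_apply, Submodule.mkQ_apply] at ha
      rw [Submodule.Quotient.mk_eq_zero] at ha
      have ha' : (A ∘L C ∘L A) (x : X) ∈ Sn1 := ha
      have := aux_main A B C h1 h2 h3 n x.1 x.2 ha'
      rw [Submodule.Quotient.mk_eq_zero]
      exact this)
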